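/- Let G be a compact topological group acting continuously on a topological space M (a MulAction with ContinuousSMul). Then for every open set U ⊆ M, the set ⋂ g : G, g • U is open in M. -/

import Mathlib

open scoped Pointwise

/-- For a continuous action of a compact topological group `G` on a
topological space `M` and an open set `U ⊆ M`, the largest invariant subset
`⋂ g, g • U` of `U` is open. -/
theorem stmt13 {G M : Type*} [Group G] [TopologicalSpace G] [IsTopologicalGroup G]
    [CompactSpace G] [TopologicalSpace M] [MulAction G M] [ContinuousSMul G M]
    (U : Set M) (hU : IsOpen U) :
    IsOpen (⋂ g : G, g • U) := by
  rw [← isClosed_compl_iff]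
  have key : (⋂ g : G, g • U)ᶜ =
      Prod.snd '' {p : G × M | p.1⁻¹ • p.2 ∈ Uᶜ} := by
    ext x
    simp only [Set.mem_compl_iff, Set.mem_iInter, not_forall, Set.mem_image,
      Set.mem_setOf_eq, Prod.exists, exists_eq_right]
    constructor
    · rintro ⟨g, hg⟩
      exact ⟨g, fun h => hg (Set.mem_smul_set_iff_inv_smul_mem.mpr h)⟩
    · rintro ⟨g, hg⟩
      exact ⟨g, fun h => hg (Set.mem_smul_set_iff_inv_smul_mem.mp h)⟩
  rw [key]
  exact isClosedMap_snd_of_compactSpace _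
    (hU.isClosed_compl.preimage ((continuous_fst.inv).smul continuous_snd))
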